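/- For every integer m ≥ 1, the formal power series G_m(x) = Σ_{n≥1} χ(m,n)·x^n over the integers satisfies (1 − x) · (∏_{i=1}^{m−1} (1 + i·x)) · G_m(x) = m! · x^m; that is, G_m(x) = m!·x^m / ((1−x)(1+x)(1+2x)⋯(1+(m−1)x)). -/

import Mathlib

open Finset in
open Classical in
/-- The (non-reduced) Euler characteristic of `Hom(K_m, K_n)`:
`χ(m,n) = Σ_η (−1)^{(Σ_i |η(i)|) − m}`, where `η` ranges over all functions from
`{1,…,m}` to nonempty subsets of `{1,…,n}` with pairwise disjoint values. -/
noncomputable def homEulerChar (m n : ℕ) : ℤ :=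
  ∑ η : Fin m → Finset (Fin n),
    if (∀ i, (η i).Nonempty) ∧ (∀ i j : Fin m, i ≠ j → Disjoint (η i) (η j))
    then (-1 : ℤ) ^ ((∑ i, (η i).card) - m) else 0

open Finset Classical

private lemma neg_one_pow_sub' {k m : ℕ} (h : k ≤ m) :
    (-1 : ℤ) ^ (m - k) = (-1) ^ m * (-1) ^ k := by
  obtain ⟨d, rfl⟩ : ∃ d, m = k + d := ⟨m - k, by omega⟩
  have hk : (-1 : ℤ) ^ k * (-1) ^ k = 1 := by
    rw [← pow_add]; exact Even.neg_one_pow ⟨k, rfl⟩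
  have h2 : k + d - k = d := by omega
  rw [h2, pow_add]
  calc (-1 : ℤ) ^ d = ((-1 : ℤ) ^ k * (-1) ^ k) * (-1) ^ d := by rw [hk, one_mul]
    _ = (-1 : ℤ) ^ k * (-1) ^ d * (-1) ^ k := by ring

private noncomputable def wgt {m n : ℕ} (f : Fin n → Option (Fin m)) : ℤ :=
  ∏ x, if f x = none then (1 : ℤ) else -1

private noncomputable def hitS {m n : ℕ} (f : Fin n → Option (Fin m)) : Finset (Fin m) :=
  univ.filter (fun i => ∃ x, f x = some i)

private lemma sum_wgt_subset (m n : ℕ) (T : Finset (Fin m)) :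
    ∑ f ∈ (univ : Finset (Fin n → Option (Fin m))).filter (fun f => hitS f ⊆ T), wgt f
      = (1 - (T.card : ℤ)) ^ n := by
  have hset : (univ : Finset (Fin n → Option (Fin m))).filter (fun f => hitS f ⊆ T)
      = Fintype.piFinset (fun _ : Fin n => insert (none : Option (Fin m)) (T.image some)) := by
    ext f
    simp only [mem_filter, mem_univ, true_and, Fintype.mem_piFinset, mem_insert, mem_image]
    constructor
    · intro h x
      cases hfx : f x with
      | none => exact Or.inl rfl
      | some i =>
          refine Or.inr ⟨i, ?_, rfl⟩
          exact h (by simp [hitS]; exact ⟨x, hfx⟩)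
    · intro h i hi
      simp only [hitS, mem_filter, mem_univ, true_and] at hi
      obtain ⟨x, hx⟩ := hi
      rcases h x with h1 | ⟨j, hj, hj2⟩
      · rw [hx] at h1; exact absurd h1 (by simp)
      · rw [hx] at hj2; obtain rfl : j = i := by injection hj2
        exact hj
  rw [hset]
  have := Finset.prod_univ_sum (fun _ : Fin n => insert (none : Option (Fin m)) (T.image some))
    (fun _ v => if v = none then (1 : ℤ) else -1)
  simp only [wgt]
  rw [← this]
  have hinner : ∑ v ∈ insert (none : Option (Fin m)) (T.image some),
      (if v = none then (1 : ℤ) else -1) = 1 - (T.card : ℤ) := by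
    rw [Finset.sum_insert (by simp)]
    rw [if_pos rfl]
    rw [Finset.sum_image (fun a _ b _ h => Option.some_injective _ h)]
    have : ∀ i ∈ T, (if (some i : Option (Fin m)) = none then (1:ℤ) else -1) = -1 := by
      intro i _; simp
    rw [Finset.sum_congr rfl this, Finset.sum_const]
    simp
    ring
  rw [Finset.prod_congr rfl (fun x _ => hinner), Finset.prod_const, Finset.card_univ,
    Fintype.card_fin]

private lemma key_ie {m : ℕ} (A : Finset (Fin m)) :
    ∑ T ∈ (univ : Finset (Fin m)).powerset.filter (fun T => A ⊆ T), (-1 : ℤ) ^ (m - T.card)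
      = if A = univ then 1 else 0 := by
  have hcard : ∀ T ∈ (univ : Finset (Fin m)).powerset.filter (fun T => A ⊆ T),
      (-1 : ℤ) ^ (m - T.card) = (-1 : ℤ) ^ m * (-1) ^ T.card := by
    intro T hT
    exact neg_one_pow_sub' (by simpa using (Finset.card_le_card (T.subset_univ)))
  rw [Finset.sum_congr rfl hcard, ← Finset.mul_sum]
  have hre : ∑ T ∈ (univ : Finset (Fin m)).powerset.filter (fun T => A ⊆ T), (-1 : ℤ) ^ T.card
      = ∑ S ∈ Aᶜ.powerset, (-1 : ℤ) ^ (S.card + A.card) := by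
    refine Finset.sum_nbij' (fun T => T \ A) (fun S => S ∪ A) ?_ ?_ ?_ ?_ ?_
    · intro T hT
      simp only [mem_filter, mem_powerset] at hT
      simp only [mem_powerset]
      intro x hx
      simp only [mem_sdiff] at hx
      simp [Finset.mem_compl, hx.2]
    · intro S hS
      simp only [mem_powerset] at hS
      simp only [mem_filter, mem_powerset]
      exact ⟨Finset.subset_univ _, Finset.subset_union_right⟩
    · intro T hT
      simp only [mem_filter, mem_powerset] at hT
      exact Finset.sdiff_union_of_subset hT.2
    · intro S hS
      simp only [mem_powerset] at hS
      apply Finset.union_sdiff_cancel_right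
      rw [Finset.disjoint_right]
      intro a haA haS
      have := hS haS
      simp only [Finset.mem_compl] at this
      exact this haA
    · intro T hT
      simp only [mem_filter, mem_powerset] at hT
      congr 1
      rw [Finset.card_sdiff_add_card_eq_card hT.2]
  rw [hre]
  have : ∑ S ∈ Aᶜ.powerset, (-1 : ℤ) ^ (S.card + A.card)
      = (∑ S ∈ Aᶜ.powerset, (-1 : ℤ) ^ S.card) * (-1) ^ A.card := by
    rw [Finset.sum_mul]
    exact Finset.sum_congr rfl fun S _ => (pow_add _ _ _)
  rw [this, Finset.sum_powerset_neg_one_pow_card]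
  simp only [Finset.compl_eq_empty_iff]
  by_cases hA : A = univ
  · subst hA
    rw [if_pos rfl, one_mul, Finset.card_univ, Fintype.card_fin, ← pow_add]
    exact Even.neg_one_pow ⟨m, rfl⟩
  · rw [if_neg hA]
    ring

private lemma sum_hit_univ (m n : ℕ) :
    ∑ f ∈ (univ : Finset (Fin n → Option (Fin m))).filter (fun f => hitS f = univ), wgt f
      = ∑ T ∈ (univ : Finset (Fin m)).powerset,
          (-1 : ℤ) ^ (m - T.card) * (1 - (T.card : ℤ)) ^ n := by
  rw [Finset.sum_filter]
  have h1 : ∀ f : Fin n → Option (Fin m),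
      (if hitS f = univ then wgt f else 0)
        = ∑ T ∈ (univ : Finset (Fin m)).powerset,
            (if hitS f ⊆ T then wgt f * (-1 : ℤ) ^ (m - T.card) else 0) := by
    intro f
    rw [← Finset.sum_filter, ← Finset.mul_sum, key_ie]
    by_cases h : hitS f = univ
    · rw [if_pos h, if_pos h, mul_one]
    · rw [if_neg h, if_neg h, mul_zero]
  rw [Finset.sum_congr rfl (fun f _ => h1 f), Finset.sum_comm]
  refine Finset.sum_congr rfl fun T _ => ?_
  rw [← Finset.sum_filter, ← Finset.sum_mul, sum_wgt_subset]
  ring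
private lemma choose_eq_blk {m n : ℕ} {η : Fin m → Finset (Fin n)}
    (hd : ∀ i j : Fin m, i ≠ j → Disjoint (η i) (η j)) {x : Fin n} {k : Fin m}
    (hx : x ∈ η k) (h : ∃ k', x ∈ η k') : Classical.choose h = k := by
  by_contra hne
  exact (Finset.disjoint_left.mp (hd _ _ hne) (Classical.choose_spec h)) hx

private lemma iη_spec {m n : ℕ} {η : Fin m → Finset (Fin n)}
    (hd : ∀ i j : Fin m, i ≠ j → Disjoint (η i) (η j)) (x : Fin n) (k : Fin m) :
    (if h : ∃ k', x ∈ η k' then some (Classical.choose h) else none) = some k ↔ x ∈ η k := by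
  constructor
  · intro hsome
    by_cases h : ∃ k', x ∈ η k'
    · rw [dif_pos h] at hsome
      obtain rfl : Classical.choose h = k := by injection hsome
      exact Classical.choose_spec h
    · rw [dif_neg h] at hsome; exact absurd hsome (by simp)
  · intro hx
    have h : ∃ k', x ∈ η k' := ⟨k, hx⟩
    rw [dif_pos h, choose_eq_blk hd hx h]

private lemma stage1 (m n : ℕ) :
    homEulerChar m n
      = (-1 : ℤ) ^ m * ∑ f ∈ (univ : Finset (Fin n → Option (Fin m))).filter
          (fun f => hitS f = univ), wgt f := by
  rw [homEulerChar, ← Finset.sum_filter, Finset.mul_sum]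
  refine Finset.sum_nbij'
    (fun η => fun x : Fin n => if h : ∃ k, x ∈ η k then some (Classical.choose h) else none)
    (fun f => fun i => univ.filter fun x => f x = some i) ?_ ?_ ?_ ?_ ?_
  · -- hi
    intro η hη
    simp only [mem_filter, mem_univ, true_and] at hη ⊢
    rw [hitS, Finset.eq_univ_iff_forall]
    intro k
    simp only [mem_filter, mem_univ, true_and]
    obtain ⟨x, hx⟩ := hη.1 k
    exact ⟨x, (iη_spec hη.2 x k).mpr hx⟩
  · -- hj
    intro f hf
    simp only [mem_filter, mem_univ, true_and] at hf ⊢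
    constructor
    · intro i
      have : i ∈ hitS f := hf ▸ mem_univ i
      simp only [hitS, mem_filter, mem_univ, true_and] at this
      obtain ⟨x, hx⟩ := this
      exact ⟨x, by simp [hx]⟩
    · intro i j hij
      rw [Finset.disjoint_left]
      intro x hxi hxj
      simp only [mem_filter, mem_univ, true_and] at hxi hxj
      rw [hxi] at hxj
      exact hij (by injection hxj)
  · -- left inverse
    intro η hη
    simp only [mem_filter, mem_univ, true_and] at hη
    funext i
    ext x
    simp only [mem_filter, mem_univ, true_and]
    exact iη_spec hη.2 x i
  · -- right inverse
    intro f _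
    funext x
    show (if h : ∃ k, x ∈ univ.filter fun y => f y = some k then some (Classical.choose h)
        else none) = f x
    by_cases h : ∃ k, x ∈ univ.filter fun y => f y = some k
    · rw [dif_pos h]
      exact ((Finset.mem_filter.mp (Classical.choose_spec h)).2).symm
    · rw [dif_neg h]
      cases hfx : f x with
      | none => rfl
      | some k => exact absurd ⟨k, by simp [hfx]⟩ h
  · -- weights
    intro η hη
    simp only [mem_filter, mem_univ, true_and] at hη
    set f := fun x : Fin n => if h : ∃ k, x ∈ η k then some (Classical.choose h) else none with hfdef
    have hS : m ≤ ∑ i, (η i).card := by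
      calc m = ∑ _i : Fin m, 1 := by simp
        _ ≤ ∑ i, (η i).card := Finset.sum_le_sum fun i _ => Finset.card_pos.mpr (hη.1 i)
    have hw : wgt f = (-1 : ℤ) ^ (∑ i, (η i).card) := by
      rw [wgt, Finset.prod_ite _ _]
      rw [Finset.prod_const, Finset.prod_const, one_pow, one_mul]
      congr 1
      have hfil : (univ : Finset (Fin n)).filter (fun x => ¬ f x = none)
          = univ.biUnion η := by
        ext x
        simp only [mem_filter, mem_univ, true_and, mem_biUnion]
        rw [show (¬ f x = none) ↔ (f x ≠ none) from Iff.rfl, Option.ne_none_iff_exists']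
        constructor
        · rintro ⟨k, hk⟩
          exact ⟨k, (iη_spec hη.2 x k).mp hk⟩
        · rintro ⟨k, hk⟩
          exact ⟨k, (iη_spec hη.2 x k).mpr hk⟩
      rw [hfil, Finset.card_biUnion (fun i _ j _ hij => hη.2 i j hij)]
    rw [hw, neg_one_pow_sub' hS]
    ring

private lemma homEulerChar_closed (m n : ℕ) :
    homEulerChar m n
      = ∑ j ∈ range (m + 1), (-1 : ℤ) ^ j * (m.choose j : ℤ) * (1 - (j : ℤ)) ^ n := by
  rw [stage1, sum_hit_univ]
  have hgroup : ∑ T ∈ (univ : Finset (Fin m)).powerset,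
      (-1 : ℤ) ^ (m - T.card) * (1 - (T.card : ℤ)) ^ n
      = ∑ j ∈ range (m + 1), (m.choose j : ℤ) * ((-1 : ℤ) ^ (m - j) * (1 - (j : ℤ)) ^ n) := by
    rw [Finset.sum_powerset (univ : Finset (Fin m))
      (fun T => (-1 : ℤ) ^ (m - T.card) * (1 - (T.card : ℤ)) ^ n)]
    rw [Finset.card_univ, Fintype.card_fin]
    refine Finset.sum_congr rfl fun j _ => ?_
    have := Finset.sum_powersetCard j (univ : Finset (Fin m))
      (fun k => (-1 : ℤ) ^ (m - k) * (1 - (k : ℤ)) ^ n)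
    rw [Finset.card_univ, Fintype.card_fin] at this
    rw [this, nsmul_eq_mul]
  rw [hgroup, Finset.mul_sum]
  refine Finset.sum_congr rfl fun j hj => ?_
  have hjm : j ≤ m := by
    have := Finset.mem_range.mp hj; omega
  rw [neg_one_pow_sub' hjm]
  have hm : (-1 : ℤ) ^ m * (-1 : ℤ) ^ m = 1 := by
    rw [← pow_add]; exact Even.neg_one_pow ⟨m, rfl⟩
  calc (-1:ℤ) ^ m * ((m.choose j : ℤ) * ((-1:ℤ) ^ m * (-1:ℤ) ^ j * (1 - (j:ℤ)) ^ n))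
      = ((-1:ℤ) ^ m * (-1:ℤ) ^ m) * ((-1:ℤ) ^ j * (m.choose j : ℤ) * (1 - (j:ℤ)) ^ n) := by ring
    _ = (-1:ℤ) ^ j * (m.choose j : ℤ) * (1 - (j:ℤ)) ^ n := by rw [hm, one_mul]

private def chiC (m n : ℕ) : ℤ :=
  ∑ j ∈ range (m + 1), (-1 : ℤ) ^ j * (m.choose j : ℤ) * (1 - (j : ℤ)) ^ n

private lemma chiC_zero (m : ℕ) (hm : 1 ≤ m) : chiC m 0 = 0 := by
  have := @Int.alternating_sum_range_choose m
  rw [if_neg (by omega)] at this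
  simpa [chiC] using this

private lemma chiC_rec (m n : ℕ) :
    chiC (m + 1) (n + 1) + (m : ℤ) * chiC (m + 1) n = ((m : ℤ) + 1) * chiC m n := by
  have key : ∀ j ∈ range (m + 2),
      (-1 : ℤ) ^ j * ((m+1).choose j : ℤ) * (1 - (j : ℤ)) ^ (n+1)
        + (m : ℤ) * ((-1 : ℤ) ^ j * ((m+1).choose j : ℤ) * (1 - (j : ℤ)) ^ n)
      = ((m : ℤ) + 1) * ((-1 : ℤ) ^ j * (m.choose j : ℤ) * (1 - (j : ℤ)) ^ n) := by
    intro j hj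
    have hjle : j ≤ m + 1 := by simpa using Nat.lt_succ_iff.mp (mem_range.mp hj)
    have hnat : (m+1).choose j * (m + 1 - j) = (m + 1) * m.choose j := by
      rw [← Nat.choose_succ_right_eq, ← Nat.add_one_mul_choose_eq]
    have hc : ((m+1).choose j : ℤ) * ((m : ℤ) + 1 - (j : ℤ)) = ((m : ℤ) + 1) * (m.choose j : ℤ) := by
      have := congrArg (fun t : ℕ => (t : ℤ)) hnat
      push_cast [Nat.cast_sub hjle] at this
      linarith [this]
    have hpow : (1 - (j : ℤ)) ^ (n+1) = (1 - (j : ℤ)) ^ n * (1 - (j : ℤ)) := pow_succ _ _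
    rw [hpow]
    linear_combination ((-1 : ℤ) ^ j * (1 - (j : ℤ)) ^ n) * hc
  unfold chiC
  rw [Finset.mul_sum, Finset.mul_sum, ← Finset.sum_add_distrib]
  have hrhs : ∑ j ∈ range (m + 1), ((m : ℤ) + 1) * ((-1 : ℤ) ^ j * (m.choose j : ℤ) * (1 - (j : ℤ)) ^ n)
      = ∑ j ∈ range (m + 2), ((m : ℤ) + 1) * ((-1 : ℤ) ^ j * (m.choose j : ℤ) * (1 - (j : ℤ)) ^ n) := by
    rw [Finset.sum_range_succ ( n := m + 1)]
    simp [Nat.choose_succ_self]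
  rw [hrhs]
  exact Finset.sum_congr rfl key

open PowerSeries in
private noncomputable def Fs (m : ℕ) : PowerSeries ℤ := PowerSeries.mk fun n => chiC m n

open PowerSeries in
private lemma Fs_step (m : ℕ) :
    (1 + C (m : ℤ) * X) * Fs (m + 1) = C ((m : ℤ) + 1) * X * Fs m := by
  ext n
  rw [add_mul, one_mul, mul_assoc, mul_assoc]
  rw [map_add, PowerSeries.coeff_C_mul, PowerSeries.coeff_C_mul]
  cases n with
  | zero =>
      simp [Fs, chiC_zero (m+1) (by omega)]
  | succ k =>
      rw [PowerSeries.coeff_succ_X_mul, PowerSeries.coeff_succ_X_mul]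
      simp only [Fs, PowerSeries.coeff_mk]
      exact chiC_rec m k

open PowerSeries in
private lemma Fs_one : (1 - X) * Fs 1 = X := by
  have hchi : ∀ n, chiC 1 n = 1 - (0 : ℤ) ^ n := by
    intro n
    simp [chiC, Finset.sum_range_succ]
    ring
  ext n
  rw [sub_mul, one_mul, map_sub]
  cases n with
  | zero => simp [Fs, hchi]
  | succ k =>
      rw [PowerSeries.coeff_succ_X_mul]
      simp only [Fs, PowerSeries.coeff_mk, hchi, PowerSeries.coeff_X]
      rcases Nat.eq_zero_or_pos k with hk | hk
      · subst hk; norm_num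
      · rw [if_neg (by omega), zero_pow (by omega), zero_pow (by omega)]
        ring

open PowerSeries in
private lemma Fs_main (m : ℕ) (hm : 1 ≤ m) :
    (1 - X) * (∏ i ∈ Finset.Icc 1 (m - 1), (1 + C (i : ℤ) * X)) * Fs m
      = C (m.factorial : ℤ) * X ^ m := by
  induction m, hm using Nat.le_induction with
  | base =>
      simp only [Nat.sub_self, show Finset.Icc 1 0 = (∅ : Finset ℕ) by rfl, Finset.prod_empty,
        mul_one]
      rw [Fs_one]
      simp
  | succ m hm ih =>
      have h1 : m + 1 - 1 = (m - 1) + 1 := by omega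
      rw [h1, Finset.prod_Icc_succ_top (by omega)]
      have h2 : m - 1 + 1 = m := by omega
      rw [h2]
      calc (1 - X) * ((∏ i ∈ Finset.Icc 1 (m-1), (1 + C (i:ℤ) * X)) * (1 + C (m:ℤ) * X)) * Fs (m+1)
          = ((1 - X) * (∏ i ∈ Finset.Icc 1 (m-1), (1 + C (i:ℤ) * X))) * ((1 + C (m:ℤ) * X) * Fs (m+1)) := by ring
        _ = ((1 - X) * (∏ i ∈ Finset.Icc 1 (m-1), (1 + C (i:ℤ) * X))) * (C ((m:ℤ)+1) * X * Fs m) := by rw [Fs_step]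
        _ = C ((m:ℤ)+1) * X * ((1 - X) * (∏ i ∈ Finset.Icc 1 (m-1), (1 + C (i:ℤ) * X)) * Fs m) := by ring
        _ = C ((m:ℤ)+1) * X * (C (m.factorial : ℤ) * X ^ m) := by rw [ih]
        _ = C (((m+1).factorial : ℤ)) * X ^ (m+1) := by
            rw [Nat.factorial_succ]
            push_cast
            rw [map_mul]
            ring

open PowerSeries in
/-- for `m ≥ 1`, the generating function `G_m(x) = Σ_{n≥1} χ(m,n)·xⁿ`
satisfies `(1 − x)·(1+x)(1+2x)⋯(1+(m−1)x) · G_m(x) = m!·x^m`. -/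
theorem homEulerChar_generating_function (m : ℕ) (hm : 1 ≤ m) :
    (1 - X) * (∏ i ∈ Finset.Icc 1 (m - 1), (1 + C (i : ℤ) * X)) *
        PowerSeries.mk (fun n => if n = 0 then 0 else homEulerChar m n)
      = C (m.factorial : ℤ) * X ^ m := by
  have h1 : PowerSeries.mk (fun n => if n = 0 then 0 else homEulerChar m n) = Fs m := by
    ext n
    simp only [PowerSeries.coeff_mk, Fs]
    rcases Nat.eq_zero_or_pos n with hn | hn
    · subst hn
      rw [if_pos rfl, chiC_zero m hm]
    · rw [if_neg (by omega)]
      rw [homEulerChar_closed]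
      rfl
  rw [h1]
  exact Fs_main m hm
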